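/- (Solution of the linear ODE arising in the rank one case.) Let β : ℝ → ℝ be a twice continuously differentiable function satisfying (1 + u²)² * deriv (deriv β) u + 2 * u * (1 + u²) * deriv β u + 4 * β u = 0 for all u ∈ ℝ. Then there exist constants b₀, b₁ ∈ ℝ such that β u = (b₀ + 2 * b₁ * u − b₀ * u²) / (1 + u²) for all u ∈ ℝ. -/

import Mathlib

open Real Set

section helpers

/-- The vector field of the first-order system. -/
noncomputable def rankOneF (u : ℝ) (p : ℝ × ℝ) : ℝ × ℝ :=
  (p.2, -(2 * u / (1 + u ^ 2)) * p.2 - (4 / (1 + u ^ 2) ^ 2) * p.1)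

lemma rankOneF_lipschitz (u : ℝ) : LipschitzWith 5 (rankOneF u) := by
  have hd : (0:ℝ) < 1 + u ^ 2 := by positivity
  have ha : |2 * u / (1 + u ^ 2)| ≤ 1 := by
    rw [abs_div, abs_of_pos hd, div_le_one hd, abs_mul]
    norm_num
    nlinarith [sq_nonneg (|u| - 1), sq_abs u]
  have hb : |4 / (1 + u ^ 2) ^ 2| ≤ 4 := by
    rw [abs_of_pos (by positivity : (0:ℝ) < 4 / (1+u^2)^2), div_le_iff₀ (by positivity)]
    nlinarith
  apply LipschitzWith.of_dist_le_mul
  intro p q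
  rw [Prod.dist_eq]
  rcases p with ⟨p1, p2⟩; rcases q with ⟨q1, q2⟩
  simp only [rankOneF, max_le_iff]
  have h1 : dist p1 q1 ≤ dist (p1, p2) (q1, q2) := by
    rw [Prod.dist_eq]; exact le_max_left _ _
  have h2 : dist p2 q2 ≤ dist (p1, p2) (q1, q2) := by
    rw [Prod.dist_eq]; exact le_max_right _ _
  have hdn : (0:ℝ) ≤ dist (p1, p2) (q1, q2) := dist_nonneg
  constructor
  · calc dist p2 q2 ≤ dist (p1,p2) (q1,q2) := h2
      _ ≤ 5 * dist (p1,p2) (q1,q2) := by linarith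
  · rw [Real.dist_eq]
    have : -(2 * u / (1 + u ^ 2)) * p2 - 4 / (1 + u ^ 2) ^ 2 * p1 -
        (-(2 * u / (1 + u ^ 2)) * q2 - 4 / (1 + u ^ 2) ^ 2 * q1)
        = (2 * u / (1 + u ^ 2)) * (q2 - p2) + (4 / (1 + u ^ 2) ^ 2) * (q1 - p1) := by ring
    rw [this]
    have hb1 : |(2 * u / (1 + u ^ 2)) * (q2 - p2)| ≤ 1 * dist p2 q2 := by
      rw [abs_mul, Real.dist_eq, abs_sub_comm]
      exact mul_le_mul_of_nonneg_right ha (abs_nonneg _)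
    have hb2 : |(4 / (1 + u ^ 2) ^ 2) * (q1 - p1)| ≤ 4 * dist p1 q1 := by
      rw [abs_mul, Real.dist_eq, abs_sub_comm]
      exact mul_le_mul_of_nonneg_right hb (abs_nonneg _)
    calc |(2 * u / (1 + u ^ 2)) * (q2 - p2) + (4 / (1 + u ^ 2) ^ 2) * (q1 - p1)|
        ≤ |(2 * u / (1 + u ^ 2)) * (q2 - p2)| + |(4 / (1 + u ^ 2) ^ 2) * (q1 - p1)| :=
          abs_add_le _ _
      _ ≤ 1 * dist p2 q2 + 4 * dist p1 q1 := add_le_add hb1 hb2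
      _ ≤ 5 * dist (p1,p2) (q1,q2) := by linarith

/-- Uniqueness: a solution of the system with zero initial data vanishes. -/
lemma rank_one_ode_zero (g g' : ℝ → ℝ)
    (hg : ∀ u, HasDerivAt g (g' u) u)
    (hg' : ∀ u, HasDerivAt g'
      (-(2 * u / (1 + u ^ 2)) * g' u - (4 / (1 + u ^ 2) ^ 2) * g u) u)
    (h0 : g 0 = 0) (h0' : g' 0 = 0) : ∀ u, g u = 0 := by
  intro u
  set x : ℝ → ℝ × ℝ := fun t => (g t, g' t) with hx
  have hx' : ∀ t, HasDerivAt x (rankOneF t (x t)) t := fun t => (hg t).prodMk (hg' t)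
  have hzero : ∀ t : ℝ, HasDerivAt (fun _ : ℝ => ((0,0) : ℝ × ℝ)) (rankOneF t (0,0)) t := by
    intro t
    have : rankOneF t ((0,0) : ℝ × ℝ) = (0,0) := by simp [rankOneF]
    rw [this]
    exact hasDerivAt_const _ _
  have key : EqOn x (fun _ => ((0,0):ℝ×ℝ)) (Icc (-(|u|+1)) (|u|+1)) := by
    apply ODE_solution_unique_of_mem_Icc (s := fun _ => (univ : Set (ℝ × ℝ)))
      (fun t _ => (rankOneF_lipschitz t).lipschitzOnWith)
      (t₀ := 0)
    · constructor <;> [linarith [abs_nonneg u]; linarith [abs_nonneg u]]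
    · exact fun t _ => (hx' t).continuousAt.continuousWithinAt
    · exact fun t _ => hx' t
    · exact fun t _ => trivial
    · exact continuousOn_const
    · exact fun t _ => hzero t
    · exact fun t _ => trivial
    · simp [hx, h0, h0']
  have hu : u ∈ Icc (-(|u|+1)) (|u|+1) := by
    constructor
    · linarith [neg_abs_le u]
    · linarith [le_abs_self u]
  have := key hu
  simpa [hx] using congrArg Prod.fst this

variable (b₀ b₁ : ℝ)

noncomputable def cand (u : ℝ) : ℝ := (b₀ + 2 * b₁ * u - b₀ * u ^ 2) / (1 + u ^ 2)
noncomputable def cand₁ (u : ℝ) : ℝ := (2*b₁ - 4*b₀*u - 2*b₁*u^2) / (1 + u ^ 2)^2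
noncomputable def cand₂ (u : ℝ) : ℝ := (-4*b₀ + 12*b₀*u^2 - 12*b₁*u + 4*b₁*u^3) / (1 + u ^ 2)^3

lemma hasDerivAt_cand (u : ℝ) : HasDerivAt (cand b₀ b₁) (cand₁ b₀ b₁ u) u := by
  have hd : (1 + u ^ 2) ≠ 0 := by positivity
  have h1 : HasDerivAt (fun u : ℝ => b₀ + 2 * b₁ * u - b₀ * u ^ 2) (2 * b₁ - b₀ * (2*u)) u := by
    have := ((hasDerivAt_const u b₀).add ((hasDerivAt_id u).const_mul (2*b₁))).sub
      (((hasDerivAt_pow 2 u)).const_mul b₀)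
    simpa [Pi.add_def, Pi.sub_def] using this
  have h2 : HasDerivAt (fun u : ℝ => 1 + u ^ 2) (2*u) u := by
    simpa using (hasDerivAt_pow 2 u).const_add (1:ℝ)
  have := h1.div h2 hd
  refine this.congr_deriv ?_
  unfold cand₁
  field_simp
  ring

lemma hasDerivAt_cand₁ (u : ℝ) : HasDerivAt (cand₁ b₀ b₁) (cand₂ b₀ b₁ u) u := by
  have hd : ((1 + u ^ 2)^2) ≠ 0 := by positivity
  have h1 : HasDerivAt (fun u : ℝ => 2*b₁ - 4*b₀*u - 2*b₁*u^2)
      (-(4*b₀) - 2*b₁*(2*u)) u := by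
    have := (((hasDerivAt_const u (2*b₁)).sub ((hasDerivAt_id u).const_mul (4*b₀))).sub
      ((hasDerivAt_pow 2 u).const_mul (2*b₁)))
    refine this.congr_deriv ?_
    norm_num
  have h2 : HasDerivAt (fun u : ℝ => (1 + u ^ 2)^2) (2*(1+u^2)*(2*u)) u := by
    have hin : HasDerivAt (fun u : ℝ => 1 + u ^ 2) (2*u) u := by
      simpa using (hasDerivAt_pow 2 u).const_add (1:ℝ)
    have := hin.pow 2
    refine this.congr_deriv ?_
    norm_num
  have := h1.div h2 hd
  refine this.congr_deriv ?_
  unfold cand₂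
  rw [div_eq_div_iff (by positivity) (by positivity)]
  ring

lemma cand_ode (u : ℝ) :
    (1 + u ^ 2) ^ 2 * cand₂ b₀ b₁ u + 2 * u * (1 + u ^ 2) * cand₁ b₀ b₁ u
      + 4 * cand b₀ b₁ u = 0 := by
  have hd : (1 + u ^ 2) ≠ 0 := by positivity
  unfold cand cand₁ cand₂
  field_simp
  ring

end helpers

/-- The general solution of the linear ODE
`(1 + u²)² β'' + 2u(1 + u²) β' + 4β = 0`
arising in the rank one case is `β u = (b₀ + 2 b₁ u − b₀ u²) / (1 + u²)`. -/
theorem rank_one_ode_solution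
    (β : ℝ → ℝ) (hβ : ContDiff ℝ 2 β)
    (hode : ∀ u : ℝ,
      (1 + u ^ 2) ^ 2 * deriv (deriv β) u + 2 * u * (1 + u ^ 2) * deriv β u + 4 * β u = 0) :
    ∃ b₀ b₁ : ℝ, ∀ u : ℝ, β u = (b₀ + 2 * b₁ * u - b₀ * u ^ 2) / (1 + u ^ 2) := by
  set b₀ := β 0 with hb₀
  set b₁ := deriv β 0 / 2 with hb₁
  refine ⟨b₀, b₁, fun u => ?_⟩
  -- regularity of β
  have hβ1 : Differentiable ℝ β := hβ.differentiable (by norm_num)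
  have hdβ : ContDiff ℝ 1 (deriv β) := by
    have h11 : ContDiff ℝ ((1:ℕ∞) + 1) β := by
      convert hβ using 2
      norm_num
    have := (contDiff_succ_iff_deriv.mp h11).2.2
    exact_mod_cast this
  have hβ2 : Differentiable ℝ (deriv β) := hdβ.differentiable one_ne_zero
  -- the difference
  set g : ℝ → ℝ := fun u => β u - cand b₀ b₁ u with hgdef
  set g' : ℝ → ℝ := fun u => deriv β u - cand₁ b₀ b₁ u with hg'def
  have hg : ∀ u, HasDerivAt g (g' u) u := fun u =>
    (hβ1 u).hasDerivAt.sub (hasDerivAt_cand b₀ b₁ u)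
  have hg' : ∀ u, HasDerivAt g'
      (-(2 * u / (1 + u ^ 2)) * g' u - (4 / (1 + u ^ 2) ^ 2) * g u) u := by
    intro u
    have h := (hβ2 u).hasDerivAt.sub (hasDerivAt_cand₁ b₀ b₁ u)
    refine h.congr_deriv ?_
    have hd : (1 + u ^ 2) ≠ 0 := by positivity
    have h1 := hode u
    have h2 := cand_ode b₀ b₁ u
    simp only [hgdef, hg'def]
    field_simp
    nlinarith [h1, h2, sq_nonneg (1 + u^2)]
  have h0 : g 0 = 0 := by simp [hgdef, cand, hb₀]
  have h0' : g' 0 = 0 := by simp [hg'def, cand₁, hb₁]; ring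
  have := rank_one_ode_zero g g' hg hg' h0 h0' u
  have : β u = cand b₀ b₁ u := by
    have := this
    simp only [hgdef] at this
    linarith
  simpa [cand] using this
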